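/- (First-order optimality condition for θ-Fraxis, Eq. (11).) Let M, ρ be Hermitian 2×2 complex matrices, let θ ∈ ℝ, and let f : ℝ³ → ℝ be defined by f(n) = Re tr(M U_n ρ U_n†) with U_n = cos(θ/2)•1 − i·sin(θ/2)•(n·σ). If the unit vector n* ∈ ℝ³ is a local minimum of f restricted to the unit sphere {n : ‖n‖ = 1}, then there exists λ ∈ ℝ such that for each k ∈ {1,2,3}: sin²(θ/2)·Σ_j R_{kj} n*_j − 2λ·n*_k = −Re( i·sin(θ/2)cos(θ/2)·tr(M(ρσ_k − σ_kρ)) ), where R_{kj} = Re(tr(M σ_k ρ σ_j) + tr(M σ_j ρ σ_k)). -/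

import Mathlib

open Matrix Complex

noncomputable def PX : Matrix (Fin 2) (Fin 2) ℂ := !![0, 1; 1, 0]
noncomputable def PY : Matrix (Fin 2) (Fin 2) ℂ := !![0, -Complex.I; Complex.I, 0]
noncomputable def PZ : Matrix (Fin 2) (Fin 2) ℂ := !![1, 0; 0, -1]

/-- The Pauli matrices `σ₁ = X`, `σ₂ = Y`, `σ₃ = Z`. -/
noncomputable def pauli : Fin 3 → Matrix (Fin 2) (Fin 2) ℂ := ![PX, PY, PZ]

/-- `n·σ = n₁X + n₂Y + n₃Z`. -/
noncomputable def nsigma (n : Fin 3 → ℝ) : Matrix (Fin 2) (Fin 2) ℂ :=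
  (n 0 : ℂ) • PX + (n 1 : ℂ) • PY + (n 2 : ℂ) • PZ

/-- `R_n(θ) = cos(θ/2)•1 − i·sin(θ/2)•(n·σ)`. -/
noncomputable def Rgate (n : Fin 3 → ℝ) (θ : ℝ) : Matrix (Fin 2) (Fin 2) ℂ :=
  ((Real.cos (θ / 2) : ℂ)) • (1 : Matrix (Fin 2) (Fin 2) ℂ)
    - (Complex.I * (Real.sin (θ / 2) : ℂ)) • nsigma n

/-- The Fraxis coefficient matrix `R_{kj} = Re(tr(Mσ_kρσ_j) + tr(Mσ_jρσ_k))`. -/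
noncomputable def fraxisMatrix (M ρ : Matrix (Fin 2) (Fin 2) ℂ) : Matrix (Fin 3) (Fin 3) ℝ :=
  Matrix.of fun k j =>
    ((M * pauli k * ρ * pauli j).trace + (M * pauli j * ρ * pauli k).trace).re

set_option maxHeartbeats 2000000 in
lemma trace_expandC (M ρ : Matrix (Fin 2) (Fin 2) ℂ) (θ : ℝ) (n : Fin 3 → ℝ) :
    (M * Rgate n θ * ρ * (Rgate n θ)ᴴ).trace
      = (Real.cos (θ/2) : ℂ)^2 * (M * ρ).trace
        + (∑ k : Fin 3, (n k : ℂ) * (Complex.I * (Real.sin (θ/2):ℂ) * (Real.cos (θ/2):ℂ)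
            * (M * (ρ * pauli k - pauli k * ρ)).trace))
        + ∑ k : Fin 3, ∑ j : Fin 3, (Real.sin (θ/2):ℂ)^2 * (n k : ℂ) * (n j : ℂ)
            * (M * pauli k * ρ * pauli j).trace := by
  simp only [Rgate, nsigma, pauli, PX, PY, PZ, Matrix.trace_fin_two, Matrix.mul_apply,
    Fin.sum_univ_two, Fin.sum_univ_three, Matrix.conjTranspose_apply, Matrix.sub_apply,
    Matrix.add_apply, Matrix.smul_apply, Matrix.one_apply, Matrix.cons_val', Matrix.cons_val_zero,
    Matrix.cons_val_one, Matrix.head_cons, Matrix.head_fin_const, Matrix.empty_val',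
    Matrix.cons_val_fin_one, Matrix.of_apply, smul_eq_mul, star_add, star_sub, star_mul',
    Complex.star_def, map_add, map_sub, _root_.map_mul, Complex.conj_ofReal, Complex.conj_I,
    _root_.map_one, _root_.map_zero, _root_.map_neg, Matrix.cons_val_two, Matrix.tail_cons,
    reduceIte, one_ne_zero, zero_ne_one, Fin.isValue, ite_true, ite_false]
  rw [Complex.ext_iff]
  constructor <;>
  · simp only [Complex.add_re, Complex.add_im, Complex.sub_re, Complex.sub_im, Complex.mul_re,
      Complex.mul_im, Complex.neg_re, Complex.neg_im, Complex.ofReal_re, Complex.ofReal_im,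
      Complex.I_re, Complex.I_im, Complex.one_re, Complex.one_im, Complex.zero_re, Complex.zero_im,
      pow_two]
    ring

noncomputable def bb (M ρ : Matrix (Fin 2) (Fin 2) ℂ) (θ : ℝ) (k : Fin 3) : ℝ :=
  (Complex.I * (Real.sin (θ/2):ℂ) * (Real.cos (θ/2):ℂ)
      * (M * (ρ * pauli k - pauli k * ρ)).trace).re

noncomputable def aa (M ρ : Matrix (Fin 2) (Fin 2) ℂ) (θ : ℝ) (k j : Fin 3) : ℝ :=
  Real.sin (θ/2)^2 * ((M * pauli k * ρ * pauli j).trace).re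

lemma f_eq (M ρ : Matrix (Fin 2) (Fin 2) ℂ) (θ : ℝ) (n : Fin 3 → ℝ) :
    ((M * Rgate n θ * ρ * (Rgate n θ)ᴴ).trace).re
      = Real.cos (θ/2)^2 * ((M*ρ).trace).re
        + (∑ k : Fin 3, bb M ρ θ k * n k)
        + ∑ k : Fin 3, ∑ j : Fin 3, aa M ρ θ k j * (n k * n j) := by
  rw [trace_expandC]
  simp only [bb, aa, Fin.sum_univ_three, Complex.add_re, Complex.mul_re, Complex.ofReal_re,
    Complex.ofReal_im, Complex.I_re, Complex.I_im, pow_two, Complex.mul_im]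
  ring

noncomputable def pr (k : Fin 3) : (Fin 3 → ℝ) →L[ℝ] ℝ := ContinuousLinearMap.proj k

lemma pr_hasD (x : Fin 3 → ℝ) (k : Fin 3) :
    HasStrictFDerivAt (fun n : Fin 3 → ℝ => n k) (pr k) x := (pr k).hasStrictFDerivAt

lemma hasD (c0 : ℝ) (b : Fin 3 → ℝ) (a : Fin 3 → Fin 3 → ℝ) (x : Fin 3 → ℝ) :
    HasStrictFDerivAt
      (fun n : Fin 3 → ℝ =>
        c0 + (∑ k : Fin 3, b k * n k) + ∑ k : Fin 3, ∑ j : Fin 3, a k j * (n k * n j))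
      ((∑ k : Fin 3, b k • pr k)
        + ∑ k : Fin 3, ∑ j : Fin 3,
            a k j • (x k • pr j + x j • pr k)) x := by
  have hp := pr_hasD x
  have h1 : HasStrictFDerivAt (fun n : Fin 3 → ℝ => ∑ k : Fin 3, b k * n k)
      (∑ k : Fin 3, b k • pr k) x :=
    HasStrictFDerivAt.fun_sum fun k _ => (hp k).const_mul (b k)
  have h2 : HasStrictFDerivAt (fun n : Fin 3 → ℝ => ∑ k : Fin 3, ∑ j : Fin 3, a k j * (n k * n j))
      (∑ k : Fin 3, ∑ j : Fin 3,
        a k j • (x k • pr j + x j • pr k)) x :=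
    HasStrictFDerivAt.fun_sum fun k _ => HasStrictFDerivAt.fun_sum fun j _ =>
      ((hp k).fun_mul (hp j)).const_mul (a k j)
  exact (h1.const_add c0).add h2

lemma hasDcon (x : Fin 3 → ℝ) :
    HasStrictFDerivAt (fun n : Fin 3 → ℝ => n 0 ^ 2 + n 1 ^ 2 + n 2 ^ 2)
      ((2 * x 0) • pr 0 + (2 * x 1) • pr 1
        + (2 * x 2) • pr 2) x := by
  have hp := pr_hasD x
  have h : HasStrictFDerivAt (fun n : Fin 3 → ℝ => n 0 * n 0 + n 1 * n 1 + n 2 * n 2)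
      ((x 0 • pr 0 + x 0 • pr 0)
        + (x 1 • pr 1 + x 1 • pr 1)
        + (x 2 • pr 2 + x 2 • pr 2)) x :=
    (((hp 0).mul (hp 0)).add ((hp 1).mul (hp 1))).add ((hp 2).mul (hp 2))
  have hfun : (fun n : Fin 3 → ℝ => n 0 ^ 2 + n 1 ^ 2 + n 2 ^ 2)
      = fun n : Fin 3 → ℝ => n 0 * n 0 + n 1 * n 1 + n 2 * n 2 := by
    funext n; ring
  rw [hfun]
  convert h using 1
  ext y
  simp [two_mul]
  ring

theorem theta_fraxis_first_order_optimality (M ρ : Matrix (Fin 2) (Fin 2) ℂ)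
    (hM : Mᴴ = M) (hρ : ρᴴ = ρ) (θ : ℝ)
    (f : (Fin 3 → ℝ) → ℝ)
    (hf : f = fun n => ((M * Rgate n θ * ρ * (Rgate n θ)ᴴ).trace).re)
    (nstar : Fin 3 → ℝ) (hstar : nstar 0 ^ 2 + nstar 1 ^ 2 + nstar 2 ^ 2 = 1)
    (hmin : IsLocalMinOn f {n : Fin 3 → ℝ | n 0 ^ 2 + n 1 ^ 2 + n 2 ^ 2 = 1} nstar) :
    ∃ lam : ℝ, ∀ k : Fin 3,
      Real.sin (θ / 2) ^ 2 * (∑ j : Fin 3, fraxisMatrix M ρ k j * nstar j)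
          - 2 * lam * nstar k =
        -((Complex.I * (Real.sin (θ / 2) : ℂ) * (Real.cos (θ / 2) : ℂ)
            * (M * (ρ * pauli k - pauli k * ρ)).trace).re) := by
  have hfg : f = fun n : Fin 3 → ℝ =>
      Real.cos (θ/2)^2 * ((M*ρ).trace).re + (∑ k : Fin 3, bb M ρ θ k * n k)
        + ∑ k : Fin 3, ∑ j : Fin 3, aa M ρ θ k j * (n k * n j) := by
    rw [hf]; funext n; exact f_eq M ρ θ n
  have hDf : HasStrictFDerivAt f
      ((∑ k : Fin 3, bb M ρ θ k • pr k)
        + ∑ k : Fin 3, ∑ j : Fin 3,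
            aa M ρ θ k j • (nstar k • pr j + nstar j • pr k)) nstar := by
    rw [hfg]; exact hasD _ _ _ nstar
  have hset : {n : Fin 3 → ℝ | n 0 ^ 2 + n 1 ^ 2 + n 2 ^ 2 = 1}
      = {n : Fin 3 → ℝ | (fun m : Fin 3 → ℝ => m 0 ^ 2 + m 1 ^ 2 + m 2 ^ 2) n
          = (fun m : Fin 3 → ℝ => m 0 ^ 2 + m 1 ^ 2 + m 2 ^ 2) nstar} := by
    ext n; simp [hstar]
  have hextr : IsLocalExtrOn f {n : Fin 3 → ℝ | (fun m : Fin 3 → ℝ => m 0 ^ 2 + m 1 ^ 2 + m 2 ^ 2) n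
      = (fun m : Fin 3 → ℝ => m 0 ^ 2 + m 1 ^ 2 + m 2 ^ 2) nstar} nstar := by
    rw [← hset]; exact Or.inl hmin
  obtain ⟨a, b, hab, h0⟩ :=
    hextr.exists_multipliers_of_hasStrictFDerivAt_1d (hasDcon nstar) hDf
  have hk0 : ∀ k : Fin 3,
      a * (2 * nstar k) + b * (bb M ρ θ k + ∑ j : Fin 3, (aa M ρ θ k j + aa M ρ θ j k) * nstar j)
        = 0 := by
    intro k
    have h1 := congrFun (congrArg DFunLike.coe h0) (Pi.single k (1:ℝ))
    fin_cases k <;>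
    · simp [ContinuousLinearMap.add_apply, ContinuousLinearMap.coe_smul', Pi.smul_apply,
        smul_eq_mul, ContinuousLinearMap.zero_apply, ContinuousLinearMap.sum_apply, pr,
        ContinuousLinearMap.proj_apply, Fin.sum_univ_three, Pi.single_apply, Fin.isValue,
        reduceIte, Fin.reduceEq, ite_true, ite_false, mul_one, mul_zero, add_zero, zero_add,
        Pi.zero_apply] at h1 ⊢
      linear_combination h1
  have hb : b ≠ 0 := by
    intro hb0
    subst hb0
    have ha : a ≠ 0 := by
      intro ha0; apply hab; simp [ha0]
    have hz : ∀ k : Fin 3, nstar k = 0 := by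
      intro k
      have h2 : a * (2 * nstar k) = 0 := by simpa using hk0 k
      rcases mul_eq_zero.1 h2 with h | h
      · exact absurd h ha
      · linarith
    rw [hz 0, hz 1, hz 2] at hstar; norm_num at hstar
  have hsum : ∀ k : Fin 3,
      ∑ j : Fin 3, (aa M ρ θ k j + aa M ρ θ j k) * nstar j
        = Real.sin (θ / 2) ^ 2 * ∑ j : Fin 3, fraxisMatrix M ρ k j * nstar j := by
    intro k
    rw [Finset.mul_sum]
    refine Finset.sum_congr rfl fun j _ => ?_
    simp only [aa, fraxisMatrix, Matrix.of_apply, Complex.add_re]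
    ring
  refine ⟨-a / b, fun k => ?_⟩
  have hk := hk0 k
  rw [hsum k] at hk
  have hgoal : Real.sin (θ / 2) ^ 2 * (∑ j : Fin 3, fraxisMatrix M ρ k j * nstar j)
      - 2 * (-a / b) * nstar k = -(bb M ρ θ k) := by
    field_simp
    nlinarith [hk, sq_nonneg b]
  simpa [bb] using hgoal
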